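/- Let $F_u(q) = \sum_{i=1}^k \min_{j \in [k]} |q_i - p_{u,j}|$. Then $F_u(p_u) = 0$, and if $q \in \mathcal{A}_0$ (i.e., the entries of $q$ intersect at least $9k/10$ of the disjoint intervals $I_1, \ldots, I_k$ around the entries of $p_0$) and $u \neq u'$ have Hamming distance at least $k_0/5$, then $F_u(q) + F_{u'}(q) \ge k\delta/5$. -/

import Mathlib

private lemma paninski_min_split (a b c d : ℝ) (hab : 2*d ≤ a + b) (hac : 2*d ≤ a + c)
    (hbc : 2*d ≤ b + c) (hc : d ≤ c) : 2*d ≤ min a c + min b c := by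
  rcases min_cases a c with ⟨h1, _⟩ | ⟨h1, _⟩ <;> rcases min_cases b c with ⟨h2, _⟩ | ⟨h2, _⟩ <;>
    rw [h1, h2] <;> linarith

private lemma paninski_geo {k : ℕ} (H : (Finset.univ : Finset (Fin k)).Nonempty)
    (p0 v v' : Fin k → ℝ) (δ r : ℝ) (hδ : 0 < δ) (hr : 2*δ ≤ r)
    (hspace : ∀ i j : Fin k, i ≠ j → 2*r ≤ |p0 i - p0 j|)
    (hv : ∀ j, |v j - p0 j| ≤ δ) (hv' : ∀ j, |v' j - p0 j| ≤ δ)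
    (m : Fin k) (hm : 2*δ ≤ |v m - v' m|) (x : ℝ) (hx : |x - p0 m| < r) :
    2*δ ≤ Finset.univ.inf' H (fun j => |x - v j|) + Finset.univ.inf' H (fun j => |x - v' j|) := by
  have key : ∀ w : Fin k → ℝ, (∀ j, |w j - p0 j| ≤ δ) →
      min (|x - w m|) (2*r - δ - |x - p0 m|) ≤ Finset.univ.inf' H (fun j => |x - w j|) := by
    intro w hw
    apply Finset.le_inf'
    intro j _
    by_cases hj : j = m
    · subst hj; exact min_le_left _ _
    · refine le_trans (min_le_right _ _) ?_
      have h1 := hspace j m hj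
      have h2 : |p0 j - p0 m| ≤ |p0 j - w j| + |w j - p0 m| := abs_sub_le _ _ _
      have h3 : |w j - p0 m| ≤ |w j - x| + |x - p0 m| := abs_sub_le _ _ _
      have h4 : |p0 j - w j| = |w j - p0 j| := abs_sub_comm _ _
      have h5 : |w j - x| = |x - w j| := abs_sub_comm _ _
      have h6 := hw j
      linarith
  have ha : |x - p0 m| - δ ≤ |x - v m| := by
    have := abs_sub_le x (v m) (p0 m); have := hv m; linarith
  have hb : |x - p0 m| - δ ≤ |x - v' m| := by
    have := abs_sub_le x (v' m) (p0 m); have := hv' m; linarith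
  have hab : 2*δ ≤ |x - v m| + |x - v' m| := by
    have h1 : |v m - v' m| ≤ |v m - x| + |x - v' m| := abs_sub_le _ _ _
    have h2 : |v m - x| = |x - v m| := abs_sub_comm _ _
    linarith
  have := paninski_min_split (|x - v m|) (|x - v' m|) (2*r - δ - |x - p0 m|) δ
    hab (by linarith) (by linarith) (by linarith)
  calc 2*δ ≤ _ := this
    _ ≤ _ := add_le_add (key v hv) (key v' hv')

/-- Separation condition for the generalized Fano inequality: `F_u(p_u) = 0`, and for
`q ∈ 𝒜₀` and `u ≠ u'` of Hamming distance at least `k0/5`, `F_u(q) + F_{u'}(q) ≥ kδ/5`. -/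
theorem paninski_separation (k0 : ℕ) (hk0 : 0 < k0)
    (p0 pu pu' q : Fin (2 * k0) → ℝ) (δ : ℝ)
    (hp0 : ∀ i : Fin (2 * k0),
      p0 i = 1 / (2 * (2 * k0 : ℝ)) + (i : ℝ) / ((2 * k0 : ℝ) * ((2 * k0 : ℝ) - 1)))
    (hδ0 : 0 < δ) (hδ : δ < 1 / (4 * (2 * k0 : ℝ) * ((2 * k0 : ℝ) - 1)))
    (u u' : Fin k0 → ℝ) (huu' : u ≠ u')
    (hu : ∀ i, u i = 1 ∨ u i = -1) (hu' : ∀ i, u' i = 1 ∨ u' i = -1)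
    (hpu1 : ∀ i : Fin k0, pu ⟨(i : ℕ), by omega⟩ = p0 ⟨(i : ℕ), by omega⟩ + u i * δ)
    (hpu2 : ∀ i : Fin k0, pu ⟨k0 + (i : ℕ), by omega⟩ = p0 ⟨k0 + (i : ℕ), by omega⟩ - u i * δ)
    (hpu'1 : ∀ i : Fin k0, pu' ⟨(i : ℕ), by omega⟩ = p0 ⟨(i : ℕ), by omega⟩ + u' i * δ)
    (hpu'2 : ∀ i : Fin k0, pu' ⟨k0 + (i : ℕ), by omega⟩ = p0 ⟨k0 + (i : ℕ), by omega⟩ - u' i * δ)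
    (hham : (k0 : ℝ) / 5 ≤ ((Finset.univ.filter fun i => u i ≠ u' i).card : ℝ))
    (hq0 : ∀ i, 0 ≤ q i) (hq1 : ∑ i, q i = 1)
    (hA0 : ((Finset.univ.filter fun i : Fin (2 * k0) => ∀ j : Fin (2 * k0),
        q j ∉ Set.Ioo (p0 i - 1 / (2 * (2 * k0 : ℝ) * ((2 * k0 : ℝ) - 1)))
                      (p0 i + 1 / (2 * (2 * k0 : ℝ) * ((2 * k0 : ℝ) - 1)))).card : ℝ)
      ≤ (2 * k0 : ℝ) / 10) :
    (∑ i, Finset.univ.inf' (Finset.univ_nonempty_iff.mpr (Fin.pos_iff_nonempty.mp (by omega)))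
        (fun j : Fin (2 * k0) => |pu i - pu j|) = 0) ∧
    (2 * k0 : ℝ) * δ / 5 ≤
      (∑ i, Finset.univ.inf' (Finset.univ_nonempty_iff.mpr (Fin.pos_iff_nonempty.mp (by omega)))
        (fun j : Fin (2 * k0) => |q i - pu j|)) +
      (∑ i, Finset.univ.inf' (Finset.univ_nonempty_iff.mpr (Fin.pos_iff_nonempty.mp (by omega)))
        (fun j : Fin (2 * k0) => |q i - pu' j|)) := by
  classical
  have hk2 : 0 < 2 * k0 := by omega
  have H : (Finset.univ : Finset (Fin (2 * k0))).Nonempty :=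
    Finset.univ_nonempty_iff.mpr (Fin.pos_iff_nonempty.mp hk2)
  haveI : Inhabited (Fin (2 * k0)) := ⟨⟨0, hk2⟩⟩
  have hK1 : (1:ℝ) ≤ (k0:ℝ) := by exact_mod_cast hk0
  have hK2 : (2:ℝ) ≤ 2 * (k0:ℝ) := by linarith
  set K : ℝ := (2 * k0 : ℝ) with hKdef
  have hX : (2:ℝ) ≤ K * (K - 1) := by nlinarith
  have hXpos : (0:ℝ) < K * (K - 1) := by linarith
  set r : ℝ := 1 / (2 * K * (K - 1)) with hrdef
  have hrpos : 0 < r := by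
    rw [hrdef]
    apply div_pos one_pos
    nlinarith
  have hr2 : 2 * δ ≤ r := by
    have h1 : r / 2 = 1 / (4 * K * (K - 1)) := by
      rw [hrdef, div_div, show 2 * K * (K - 1) * 2 = 4 * K * (K - 1) by ring]
    rw [← h1] at hδ
    linarith
  have h2r : 2 * r = 1 / (K * (K - 1)) := by
    rw [hrdef, mul_one_div, show 2 * K * (K - 1) = 2 * (K * (K - 1)) by ring, ← div_div]
    norm_num
  -- spacing of the centers
  have hspace : ∀ i j : Fin (2 * k0), i ≠ j → 2 * r ≤ |p0 i - p0 j| := by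
    intro i j hij
    have hdiff : p0 i - p0 j = ((i:ℝ) - (j:ℝ)) / (K * (K - 1)) := by
      rw [hp0 i, hp0 j]; ring
    have hne : ((i:ℕ):ℤ) ≠ ((j:ℕ):ℤ) := by
      intro h
      exact hij (Fin.ext (by exact_mod_cast h))
    have h1 : (1:ℤ) ≤ |((i:ℕ):ℤ) - ((j:ℕ):ℤ)| := Int.one_le_abs (sub_ne_zero.mpr hne)
    have h1' : (1:ℝ) ≤ |(i:ℝ) - (j:ℝ)| := by exact_mod_cast h1
    rw [hdiff, abs_div, abs_of_pos hXpos, h2r]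
    gcongr
  -- pu and pu' stay within δ of the centers
  have hvbound : ∀ (v : Fin (2 * k0) → ℝ) (uu : Fin k0 → ℝ),
      (∀ i, uu i = 1 ∨ uu i = -1) →
      (∀ i : Fin k0, v ⟨(i : ℕ), by omega⟩ = p0 ⟨(i : ℕ), by omega⟩ + uu i * δ) →
      (∀ i : Fin k0, v ⟨k0 + (i : ℕ), by omega⟩ = p0 ⟨k0 + (i : ℕ), by omega⟩ - uu i * δ) →
      ∀ j : Fin (2 * k0), |v j - p0 j| ≤ δ := by
    intro v uu huu hv1 hv2 j
    obtain ⟨jv, hjv⟩ := j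
    by_cases h : jv < k0
    · have he : v ⟨jv, hjv⟩ = p0 ⟨jv, hjv⟩ + uu ⟨jv, h⟩ * δ := hv1 ⟨jv, h⟩
      rw [he]
      have heq : p0 ⟨jv, hjv⟩ + uu ⟨jv, h⟩ * δ - p0 ⟨jv, hjv⟩ = uu ⟨jv, h⟩ * δ := by ring
      rw [heq, abs_mul]
      rcases huu ⟨jv, h⟩ with h' | h' <;> rw [h'] <;> simp [abs_of_pos hδ0]
    · have hlt : jv - k0 < k0 := by omega
      have hval : (⟨k0 + ((⟨jv - k0, hlt⟩ : Fin k0) : ℕ), by omega⟩ : Fin (2 * k0)) =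
          ⟨jv, hjv⟩ := by
        apply Fin.ext; simp; omega
      have he := hv2 ⟨jv - k0, hlt⟩
      rw [hval] at he
      rw [he]
      have heq : p0 ⟨jv, hjv⟩ - uu ⟨jv - k0, hlt⟩ * δ - p0 ⟨jv, hjv⟩ =
          -(uu ⟨jv - k0, hlt⟩ * δ) := by ring
      rw [heq, abs_neg, abs_mul]
      rcases huu ⟨jv - k0, hlt⟩ with h' | h' <;> rw [h'] <;> simp [abs_of_pos hδ0]
  have hvu : ∀ j, |pu j - p0 j| ≤ δ := hvbound pu u hu hpu1 hpu2
  have hvu' : ∀ j, |pu' j - p0 j| ≤ δ := hvbound pu' u' hu' hpu'1 hpu'2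
  constructor
  · -- Part 1 : F_u(p_u) = 0
    apply Finset.sum_eq_zero
    intro i _
    apply le_antisymm
    · have h := Finset.inf'_le (s := (Finset.univ : Finset (Fin (2*k0))))
        (fun j => |pu i - pu j|) (Finset.mem_univ i)
      exact le_of_le_of_eq h (by simp)
    · exact Finset.le_inf' _ _ fun j _ => abs_nonneg _
  · -- Part 2
    set Mq := Finset.univ.filter fun i : Fin (2 * k0) => ∀ j : Fin (2 * k0),
        q j ∉ Set.Ioo (p0 i - r) (p0 i + r) with hMqdef
    set Δ := Finset.univ.filter fun i : Fin k0 => u i ≠ u' i with hΔdef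
    set e1 : Fin k0 → Fin (2 * k0) := fun a => ⟨(a : ℕ), by omega⟩ with he1def
    set e2 : Fin k0 → Fin (2 * k0) := fun a => ⟨k0 + (a : ℕ), by omega⟩ with he2def
    set D := Δ.image e1 ∪ Δ.image e2 with hDdef
    have hDcard : D.card = 2 * Δ.card := by
      rw [hDdef, Finset.card_union_of_disjoint, Finset.card_image_of_injective,
        Finset.card_image_of_injective]
      · ring
      · intro a b hab
        apply Fin.ext
        have := congrArg Fin.val hab
        simp [he2def] at this
        exact this
      · intro a b hab
        apply Fin.ext
        have := congrArg Fin.val hab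
        simpa [he1def] using this
      · rw [Finset.disjoint_left]
        intro x hx1 hx2
        obtain ⟨a, _, rfl⟩ := Finset.mem_image.mp hx1
        obtain ⟨b, _, hb⟩ := Finset.mem_image.mp hx2
        have := congrArg Fin.val hb
        simp [he1def, he2def] at this
        omega
    -- the "differing pair" distance
    have habs : ∀ a : Fin k0, a ∈ Δ → ∀ x : ℝ, (x = (u a - u' a) * δ ∨ x = (u' a - u a) * δ) →
        2 * δ ≤ |x| := by
      intro a ha x hx
      have hane : u a ≠ u' a := by simpa [hΔdef] using ha
      rcases hu a with h3 | h3 <;> rcases hu' a with h4 | h4 <;>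
        first
          | exact absurd (h3.trans h4.symm) hane
          | (rcases hx with rfl | rfl <;> rw [h3, h4, abs_mul, abs_of_pos hδ0] <;> norm_num)
    have hpair : ∀ m ∈ D, 2 * δ ≤ |pu m - pu' m| := by
      intro m hm
      rw [hDdef, Finset.mem_union] at hm
      rcases hm with hm | hm <;> obtain ⟨a, ha, rfl⟩ := Finset.mem_image.mp hm
      · have h1 : pu (e1 a) = p0 (e1 a) + u a * δ := hpu1 a
        have h2 : pu' (e1 a) = p0 (e1 a) + u' a * δ := hpu'1 a
        have he : pu (e1 a) - pu' (e1 a) = (u a - u' a) * δ := by rw [h1, h2]; ring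
        rw [he]
        exact habs a ha _ (Or.inl rfl)
      · have h1 : pu (e2 a) = p0 (e2 a) - u a * δ := hpu2 a
        have h2 : pu' (e2 a) = p0 (e2 a) - u' a * δ := hpu'2 a
        have he : pu (e2 a) - pu' (e2 a) = (u' a - u a) * δ := by rw [h1, h2]; ring
        rw [he]
        exact habs a ha _ (Or.inr rfl)
    set E := D \ Mq with hEdef
    have hwit : ∀ m ∈ E, ∃ j, q j ∈ Set.Ioo (p0 m - r) (p0 m + r) := by
      intro m hm
      have hm2 : m ∉ Mq := (Finset.mem_sdiff.mp hm).2
      rw [hMqdef, Finset.mem_filter] at hm2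
      push_neg at hm2
      exact hm2 (Finset.mem_univ m)
    choose! w hw using hwit
    have hwinj : Set.InjOn w E := by
      intro m1 h1 m2 h2 heq
      by_contra hne
      have hs := hspace m1 m2 hne
      have q1 := hw m1 h1
      have q2 := hw m2 h2
      rw [heq] at q1
      rw [Set.mem_Ioo] at q1 q2
      rcases abs_cases (p0 m1 - p0 m2) with ⟨h, _⟩ | ⟨h, _⟩ <;>
        rw [h] at hs <;> linarith [q1.1, q1.2, q2.1, q2.2, hrpos]
    have hcardT : (Finset.image w E).card = E.card := Finset.card_image_of_injOn hwinj
    have hEcard : (k0:ℝ)/5 ≤ ((Finset.image w E).card : ℝ) := by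
      have hsub : D ⊆ E ∪ Mq := by
        intro x hx
        rw [Finset.mem_union, hEdef, Finset.mem_sdiff]
        by_cases h : x ∈ Mq
        · exact Or.inr h
        · exact Or.inl ⟨hx, h⟩
      have h1 : D.card ≤ E.card + Mq.card :=
        le_trans (Finset.card_le_card hsub) (Finset.card_union_le _ _)
      have h2 : ((D.card : ℕ) : ℝ) ≤ (E.card : ℝ) + (Mq.card : ℝ) := by exact_mod_cast h1
      rw [hcardT]
      have h3 : (D.card : ℝ) = 2 * (Δ.card : ℝ) := by rw [hDcard]; push_cast; ring
      have h4 : (Mq.card : ℝ) ≤ K / 10 := hA0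
      rw [hKdef] at h4
      linarith [hham]
    have hTbound : ∀ i ∈ Finset.image w E,
        2 * δ ≤ Finset.univ.inf' H (fun j => |q i - pu j|) +
                Finset.univ.inf' H (fun j => |q i - pu' j|) := by
      intro i hi
      obtain ⟨m, hm, rfl⟩ := Finset.mem_image.mp hi
      have hmD : m ∈ D := (Finset.mem_sdiff.mp hm).1
      have hx : |q (w m) - p0 m| < r := by
        have hq := hw m hm
        rw [Set.mem_Ioo] at hq
        rw [abs_lt]
        constructor <;> linarith [hq.1, hq.2]
      exact paninski_geo H p0 pu pu' δ r hδ0 hr2 hspace hvu hvu' m (hpair m hmD) _ hx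
    have hnn : ∀ i ∈ Finset.univ, i ∉ Finset.image w E →
        0 ≤ Finset.univ.inf' H (fun j => |q i - pu j|) +
            Finset.univ.inf' H (fun j => |q i - pu' j|) := by
      intro i _ _
      exact add_nonneg (Finset.le_inf' _ _ fun j _ => abs_nonneg _)
        (Finset.le_inf' _ _ fun j _ => abs_nonneg _)
    have hsum1 : ((Finset.image w E).card : ℝ) * (2 * δ) ≤
        ∑ i ∈ Finset.image w E, (Finset.univ.inf' H (fun j => |q i - pu j|) +
          Finset.univ.inf' H (fun j => |q i - pu' j|)) := by
      have := Finset.card_nsmul_le_sum (Finset.image w E)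
        (fun i => Finset.univ.inf' H (fun j => |q i - pu j|) +
          Finset.univ.inf' H (fun j => |q i - pu' j|)) (2*δ) hTbound
      simpa [nsmul_eq_mul] using this
    have hsum2 : ∑ i ∈ Finset.image w E, (Finset.univ.inf' H (fun j => |q i - pu j|) +
          Finset.univ.inf' H (fun j => |q i - pu' j|)) ≤
        ∑ i, (Finset.univ.inf' H (fun j => |q i - pu j|) +
          Finset.univ.inf' H (fun j => |q i - pu' j|)) :=
      Finset.sum_le_sum_of_subset_of_nonneg (Finset.subset_univ _) hnn
    rw [← Finset.sum_add_distrib]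
    calc K * δ / 5 ≤ ((Finset.image w E).card : ℝ) * (2 * δ) := by
          have := mul_le_mul_of_nonneg_right hEcard (le_of_lt hδ0)
          rw [hKdef]; linarith
      _ ≤ _ := le_trans hsum1 hsum2
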